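/- arXiv:2605.24502 — 2 statements merged into one kernel-verified Lean document; each statement's English description precedes it below -/
import Mathlib

section
/- Local binarization theorem: Let A ∈ ℝ^{M×N} with singular values satisfying σ_min > 0 and operator norm σ_max, let b ∈ ℝ^M, and define L(θ) = ‖A cos θ − b‖₂² + ‖A sin θ‖₂². For θ ∈ ℝ^N with sin θ ≠ 0, define η(θ) = σ_min² / (2σ_max(σ_max + 2‖A cos θ − b‖₂/‖sin θ‖₂)) and θ̃_i = π·round(θ_i/π). If ‖sin θ‖∞ ≤ η(θ), then L(θ̃) ≤ L(θ) − (1/2)σ_min² ‖sin θ‖₂². -/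
open Real Finset

/-- Euclidean (ℓ2) norm of a finite real vector. -/
noncomputable def l2enorm {m : ℕ} (v : Fin m → ℝ) : ℝ := Real.sqrt (∑ j, (v j) ^ 2)

lemma l2enorm_nonneg {m : ℕ} (v : Fin m → ℝ) : 0 ≤ l2enorm v := Real.sqrt_nonneg _

lemma l2enorm_sq {m : ℕ} (v : Fin m → ℝ) : l2enorm v ^ 2 = ∑ j, (v j) ^ 2 :=
  Real.sq_sqrt (Finset.sum_nonneg fun j _ => sq_nonneg _)

lemma l2enorm_eq {m : ℕ} (v : Fin m → ℝ) :
    l2enorm v = ‖(WithLp.equiv 2 (Fin m → ℝ)).symm v‖ := by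
  simp only [EuclideanSpace.norm_eq, Real.norm_eq_abs, sq_abs, l2enorm]
  rfl

lemma l2enorm_add_le {m : ℕ} (u w : Fin m → ℝ) : l2enorm (u + w) ≤ l2enorm u + l2enorm w := by
  rw [l2enorm_eq, l2enorm_eq, l2enorm_eq, show (WithLp.equiv 2 (Fin m → ℝ)).symm (u + w) = (WithLp.equiv 2 (Fin m → ℝ)).symm u + (WithLp.equiv 2 (Fin m → ℝ)).symm w from rfl]
  exact norm_add_le _ _

lemma l2enorm_zero {m : ℕ} : l2enorm (0 : Fin m → ℝ) = 0 := by
  simp [l2enorm]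

lemma key_abs (x : ℝ) :
    |Real.cos (Real.pi * (round (x / Real.pi) : ℤ)) - Real.cos x| ≤ Real.sin x ^ 2 := by
  have hπ := Real.pi_pos
  set k : ℤ := round (x / Real.pi) with hk
  set δ : ℝ := x - k * Real.pi with hδ
  have hδ2 : |δ| ≤ Real.pi / 2 := by
    have h := abs_sub_round (x / Real.pi)
    have h2 : δ = Real.pi * (x / Real.pi - k) := by
      field_simp [hδ]; ring
    rw [h2, abs_mul, abs_of_pos hπ]
    nlinarith
  have hcos : Real.cos x = (-1) ^ k * Real.cos δ := by
    rw [show x = (k : ℝ) * Real.pi - (-δ) by rw [hδ]; ring, Real.cos_int_mul_pi_sub,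
      Real.cos_neg]
  have hcosk : Real.cos (Real.pi * k) = (-1) ^ k := by
    rw [mul_comm, show (k : ℝ) * Real.pi = (k : ℝ) * Real.pi - 0 by ring,
      Real.cos_int_mul_pi_sub, Real.cos_zero, mul_one]
  have hcδ0 : 0 ≤ Real.cos δ := by
    rcases abs_le.mp hδ2 with ⟨h1, h2⟩
    exact Real.cos_nonneg_of_neg_pi_div_two_le_of_le h1 h2
  have hcδ1 : Real.cos δ ≤ 1 := Real.cos_le_one δ
  have hpm : ((-1 : ℝ)) ^ k = 1 ∨ ((-1 : ℝ)) ^ k = -1 := by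
    rcases Int.even_or_odd k with h | h
    · exact Or.inl h.neg_one_zpow
    · exact Or.inr h.neg_one_zpow
  have hone : |((-1 : ℝ) ^ k)| = 1 := by rcases hpm with h | h <;> rw [h] <;> norm_num
  have hsq : ((-1 : ℝ) ^ k) ^ 2 = 1 := by rcases hpm with h | h <;> rw [h] <;> norm_num
  have hsin2 : Real.sin x ^ 2 = 1 - Real.cos δ ^ 2 := by
    have h := Real.sin_sq_add_cos_sq x
    rw [hcos, mul_pow, hsq, one_mul] at h
    linarith
  calc |Real.cos (Real.pi * k) - Real.cos x|
      = |((-1 : ℝ) ^ k)| * |1 - Real.cos δ| := by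
        rw [hcosk, hcos, ← abs_mul]; ring_nf
    _ = 1 - Real.cos δ := by rw [hone, one_mul, abs_of_nonneg (by linarith)]
    _ ≤ 1 - Real.cos δ ^ 2 := by nlinarith
    _ = Real.sin x ^ 2 := hsin2.symm

set_option maxHeartbeats 1000000 in
lemma aux {M N : ℕ} (A : Matrix (Fin M) (Fin N) ℝ) (b : Fin M → ℝ)
    (σmin σmax η : ℝ) (hσ : 0 < σmin)
    (hmin : ∀ v : Fin N → ℝ, σmin * l2enorm v ≤ l2enorm (A.mulVec v))
    (hmax : ∀ v : Fin N → ℝ, l2enorm (A.mulVec v) ≤ σmax * l2enorm v)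
    (c ct s : Fin N → ℝ)
    (hkey : ∀ i, |ct i - c i| ≤ s i ^ 2)
    (hηle : ∀ i, |s i| ≤ η) (hη0 : 0 ≤ η) (hη1 : η ≤ 1)
    (hS : 0 < l2enorm s)
    (hsup : η ≤ σmin ^ 2 / (2 * σmax * (σmax + 2 * l2enorm (A.mulVec c - b) / l2enorm s))) :
    l2enorm (A.mulVec ct - b) ^ 2 ≤ l2enorm (A.mulVec c - b) ^ 2 + l2enorm (A.mulVec s) ^ 2
      - (1 / 2) * σmin ^ 2 * l2enorm s ^ 2 := by
  set R := l2enorm (A.mulVec c - b) with hRdef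
  set S := l2enorm s with hSdef
  have hR0 : 0 ≤ R := l2enorm_nonneg _
  have hσmax : 0 < σmax := by
    have h3 : σmin * S ≤ σmax * S := (hmin s).trans (hmax s)
    have h4 : σmin ≤ σmax := (mul_le_mul_iff_of_pos_right hS).mp h3
    linarith
  -- bound on the perturbation
  have hd : l2enorm (ct - c) ≤ η * S := by
    have hsum : ∑ j, ((ct - c) j) ^ 2 ≤ η ^ 2 * ∑ j, (s j) ^ 2 := by
      rw [Finset.mul_sum]
      refine Finset.sum_le_sum fun j _ => ?_
      have h1 := hkey j
      have h2 := hηle j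
      have h3 : |ct j - c j| ^ 2 ≤ (η * |s j|) ^ 2 := by
        have : s j ^ 2 ≤ η * |s j| := by nlinarith [sq_abs (s j), abs_nonneg (s j)]
        nlinarith [abs_nonneg (ct j - c j), abs_nonneg (s j),
          mul_nonneg hη0 (abs_nonneg (s j))]
      simpa [sq_abs, mul_pow, Pi.sub_apply] using h3
    have h4 : l2enorm (ct - c) ≤ Real.sqrt (η ^ 2 * ∑ j, (s j) ^ 2) :=
      Real.sqrt_le_sqrt hsum
    rwa [Real.sqrt_mul (sq_nonneg η), Real.sqrt_sq hη0] at h4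
  have hmain : l2enorm (A.mulVec ct - b) ≤ R + σmax * (η * S) := by
    have hsplit : A.mulVec ct - b = (A.mulVec c - b) + A.mulVec (ct - c) := by
      rw [Matrix.mulVec_sub]; abel
    rw [hsplit]
    refine le_trans (l2enorm_add_le _ _) ?_
    have h1 := hmax (ct - c)
    have h2 : σmax * l2enorm (ct - c) ≤ σmax * (η * S) :=
      mul_le_mul_of_nonneg_left hd hσmax.le
    linarith
  have hsq : l2enorm (A.mulVec ct - b) ^ 2 ≤ (R + σmax * (η * S)) ^ 2 :=
    pow_le_pow_left₀ (l2enorm_nonneg _) hmain 2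
  have hAs : σmin ^ 2 * S ^ 2 ≤ l2enorm (A.mulVec s) ^ 2 := by
    have h1 := hmin s
    nlinarith [l2enorm_nonneg (A.mulVec s), mul_nonneg hσ.le hS.le]
  have hden : 0 < 2 * σmax * (σmax + 2 * R / S) := by
    have h1 : 0 ≤ 2 * R / S := by positivity
    nlinarith
  have hsup' : η * (2 * σmax * (σmax + 2 * R / S)) ≤ σmin ^ 2 := by
    rw [← le_div_iff₀ hden]; exact hsup
  have hη2 : η ^ 2 ≤ η := by nlinarith
  have hextra : 2 * R * (σmax * (η * S)) + (σmax * (η * S)) ^ 2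
      ≤ 1 / 2 * σmin ^ 2 * S ^ 2 := by
    have h2 : η * (2 * σmax * (σmax + 2 * R / S)) * S ^ 2 ≤ σmin ^ 2 * S ^ 2 :=
      mul_le_mul_of_nonneg_right hsup' (sq_nonneg S)
    have h3 : η * (2 * σmax * (σmax + 2 * R / S)) * S ^ 2
        = 2 * η * σmax ^ 2 * S ^ 2 + 4 * σmax * R * η * S := by
      field_simp
      ring
    rw [h3] at h2
    have h4 : (σmax * (η * S)) ^ 2 ≤ η * σmax ^ 2 * S ^ 2 := by
      nlinarith [mul_nonneg (sub_nonneg.mpr hη2) (sq_nonneg (σmax * S))]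
    nlinarith
  have hexp : (R + σmax * (η * S)) ^ 2
      = R ^ 2 + (2 * R * (σmax * (η * S)) + (σmax * (η * S)) ^ 2) := by ring
  rw [hexp] at hsq
  linarith

theorem local_binarization {M N : ℕ} (A : Matrix (Fin M) (Fin N) ℝ) (b : Fin M → ℝ)
    (σmin σmax : ℝ) (hσ : 0 < σmin)
    (hmin : ∀ v : Fin N → ℝ, σmin * l2enorm v ≤ l2enorm (A.mulVec v))
    (hmax : ∀ v : Fin N → ℝ, l2enorm (A.mulVec v) ≤ σmax * l2enorm v)
    (θ : Fin N → ℝ)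
    (hsin : (fun i => Real.sin (θ i)) ≠ 0)
    (hsup : (⨆ i, |Real.sin (θ i)|)
      ≤ σmin ^ 2 / (2 * σmax * (σmax +
          2 * l2enorm (A.mulVec (fun i => Real.cos (θ i)) - b)
            / l2enorm (fun i => Real.sin (θ i))))) :
    (l2enorm (A.mulVec (fun i => Real.cos (Real.pi * (round (θ i / Real.pi) : ℤ))) - b)) ^ 2
      + (l2enorm (A.mulVec (fun i => Real.sin (Real.pi * (round (θ i / Real.pi) : ℤ))))) ^ 2
    ≤ (l2enorm (A.mulVec (fun i => Real.cos (θ i)) - b)) ^ 2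
      + (l2enorm (A.mulVec (fun i => Real.sin (θ i)))) ^ 2
      - (1 / 2) * σmin ^ 2 * (l2enorm (fun i => Real.sin (θ i))) ^ 2 := by
  have hN : Nonempty (Fin N) := by
    by_contra h
    exact hsin (funext fun i => absurd ⟨i⟩ h)
  have hzero : (fun i => Real.sin (Real.pi * (round (θ i / Real.pi) : ℤ)))
      = (0 : Fin N → ℝ) := by
    funext i
    rw [mul_comm]
    exact Real.sin_int_mul_pi _
  rw [hzero, Matrix.mulVec_zero, l2enorm_zero]
  have hS : 0 < l2enorm (fun i => Real.sin (θ i)) := by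
    obtain ⟨i, hi⟩ : ∃ i, Real.sin (θ i) ≠ 0 := by
      by_contra h
      push_neg at h
      exact hsin (funext h)
    have hpos : 0 < ∑ j, Real.sin (θ j) ^ 2 :=
      Finset.sum_pos' (fun j _ => sq_nonneg _) ⟨i, Finset.mem_univ i, by positivity⟩
    exact Real.sqrt_pos.mpr hpos
  have hηle : ∀ i, |Real.sin (θ i)| ≤ ⨆ i, |Real.sin (θ i)| := fun i =>
    le_ciSup (f := fun i => |Real.sin (θ i)|) (Set.Finite.bddAbove (Set.finite_range _)) i
  have hη0 : 0 ≤ ⨆ i, |Real.sin (θ i)| :=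
    le_trans (abs_nonneg _) (hηle (Classical.arbitrary _))
  have hη1 : (⨆ i, |Real.sin (θ i)|) ≤ 1 :=
    ciSup_le fun i => abs_le.mpr ⟨Real.neg_one_le_sin _, Real.sin_le_one _⟩
  have h := aux A b σmin σmax _ hσ hmin hmax
    (fun i => Real.cos (θ i)) (fun i => Real.cos (Real.pi * (round (θ i / Real.pi) : ℤ)))
    (fun i => Real.sin (θ i)) (fun i => key_abs (θ i)) hηle hη0 hη1 hS hsup
  linarith
end

section
/- Under the hypotheses of the local binarization theorem, any global minimizer θ* of L(θ) = ‖A cos θ − b‖₂² + ‖A sin θ‖₂² that lies in the set B = {θ : sin θ = 0} ∪ {θ : sin θ ≠ 0 and ‖sin θ‖∞ ≤ η(θ)} must satisfy sin θ* = 0 (i.e., cos θ* ∈ {±1}^N). -/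
open Real Finset

/-- Euclidean (ℓ2) norm of a finite real vector. -/
noncomputable def euclNorm {m : ℕ} (v : Fin m → ℝ) : ℝ := Real.sqrt (∑ j, (v j) ^ 2)

/-- The relaxed loss `L(θ) = ‖A cos θ − b‖₂² + ‖A sin θ‖₂²`. -/
noncomputable def lossL {M N : ℕ} (A : Matrix (Fin M) (Fin N) ℝ) (b : Fin M → ℝ)
    (θ : Fin N → ℝ) : ℝ :=
  (euclNorm (A.mulVec (fun i => Real.cos (θ i)) - b)) ^ 2
    + (euclNorm (A.mulVec (fun i => Real.sin (θ i)))) ^ 2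

lemma euclNorm_nonneg' {m : ℕ} (v : Fin m → ℝ) : 0 ≤ euclNorm v := Real.sqrt_nonneg _

lemma euclNorm_eq_norm {m : ℕ} (v : Fin m → ℝ) :
    euclNorm v = ‖(WithLp.equiv 2 (Fin m → ℝ)).symm v‖ := by
  rw [EuclideanSpace.norm_eq]
  simp [euclNorm, Real.norm_eq_abs, sq_abs]

lemma euclNorm_add_le {m : ℕ} (u v : Fin m → ℝ) : euclNorm (u + v) ≤ euclNorm u + euclNorm v := by
  simp only [euclNorm_eq_norm]
  rw [WithLp.equiv_symm_apply, WithLp.toLp_add]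
  exact norm_add_le _ _

lemma euclNorm_sq {m : ℕ} (v : Fin m → ℝ) : (euclNorm v) ^ 2 = ∑ j, (v j) ^ 2 :=
  Real.sq_sqrt (Finset.sum_nonneg fun _ _ => sq_nonneg _)

lemma euclNorm_zero {m : ℕ} : euclNorm (0 : Fin m → ℝ) = 0 := by
  simp [euclNorm]

set_option maxHeartbeats 1000000 in
theorem global_minimizer_in_basin_is_binary {M N : ℕ}
    (A : Matrix (Fin M) (Fin N) ℝ) (b : Fin M → ℝ)
    (σmin σmax : ℝ) (hσ : 0 < σmin)
    (hmin : ∀ v : Fin N → ℝ, σmin * euclNorm v ≤ euclNorm (A.mulVec v))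
    (hmax : ∀ v : Fin N → ℝ, euclNorm (A.mulVec v) ≤ σmax * euclNorm v)
    (θs : Fin N → ℝ)
    (hglobal : ∀ τ : Fin N → ℝ, lossL A b θs ≤ lossL A b τ)
    (hB : (fun i => Real.sin (θs i)) = 0 ∨
      ((fun i => Real.sin (θs i)) ≠ 0 ∧
        (⨆ i, |Real.sin (θs i)|)
          ≤ σmin ^ 2 / (2 * σmax * (σmax +
              2 * euclNorm (A.mulVec (fun i => Real.cos (θs i)) - b)
                / euclNorm (fun i => Real.sin (θs i)))))) :
    (fun i => Real.sin (θs i)) = 0 := by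
  rcases hB with h | ⟨hne, hη⟩
  · exact h
  exfalso
  set s : Fin N → ℝ := fun i => Real.sin (θs i) with hs
  set c : Fin N → ℝ := fun i => Real.cos (θs i) with hc
  -- some coordinate nonzero
  have hNe : ∃ i, s i ≠ 0 := by
    by_contra h
    push_neg at h
    exact hne (funext h)
  obtain ⟨i₀, hi₀⟩ := hNe
  haveI : Nonempty (Fin N) := ⟨i₀⟩
  set S : ℝ := euclNorm s with hS
  have hSpos : 0 < S := by
    have h1 : 0 < ∑ j, (s j) ^ 2 := by
      apply Finset.sum_pos' (fun j _ => sq_nonneg _)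
      exact ⟨i₀, Finset.mem_univ _, by positivity⟩
    exact Real.sqrt_pos.mpr h1
  -- σmax ≥ σmin
  have hσmax : σmin ≤ σmax := by
    have := (hmin s).trans (hmax s)
    exact le_of_mul_le_mul_right this hSpos
  have hσmaxpos : 0 < σmax := lt_of_lt_of_le hσ hσmax
  set η : ℝ := ⨆ i, |s i| with hηdef
  have hbdd : BddAbove (Set.range fun i => |s i|) := Set.Finite.bddAbove (Set.finite_range _)
  have hη1 : η ≤ 1 := ciSup_le fun i => abs_sin_le_one _
  have hηi : ∀ i, |s i| ≤ η := fun i => le_ciSup hbdd i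
  have hη0 : 0 ≤ η := le_trans (abs_nonneg _) (hηi i₀)
  -- binarized point
  set τ : Fin N → ℝ := fun i => if 0 ≤ c i then 0 else Real.pi with hτ
  have hcosτ : (fun i => Real.cos (τ i)) = fun i => if 0 ≤ c i then 1 else -1 := by
    funext i
    by_cases h : 0 ≤ c i <;> simp [hτ, h]
  have hsinτ : (fun i => Real.sin (τ i)) = 0 := by
    funext i
    by_cases h : 0 ≤ c i <;> simp [hτ, h]
  set ct : Fin N → ℝ := fun i => if 0 ≤ c i then 1 else -1 with hct
  -- componentwise bound
  have hcomp : ∀ i, |ct i - c i| ≤ η * |s i| := by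
    intro i
    have hc1 : |c i| ≤ 1 := abs_cos_le_one _
    have hsq : (s i) ^ 2 = 1 - (c i) ^ 2 := by
      have h := Real.sin_sq_add_cos_sq (θs i)
      have hse : s i = Real.sin (θs i) := rfl
      have hce : c i = Real.cos (θs i) := rfl
      rw [hse, hce]; linarith
    have h1 : |ct i - c i| = 1 - |c i| := by
      by_cases h : 0 ≤ c i
      · simp only [hct, if_pos h]
        rw [abs_of_nonneg h, abs_of_nonneg (by linarith [abs_le.mp hc1] : (0:ℝ) ≤ 1 - c i)]
      · simp only [hct, if_neg h]
        push_neg at h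
        rw [abs_of_neg h, abs_of_nonpos (by linarith [(abs_le.mp hc1).1] : -1 - c i ≤ 0)]
        ring
    rw [h1]
    have h2 : 1 - |c i| ≤ (s i) ^ 2 := by
      nlinarith [sq_abs (c i), abs_nonneg (c i), hsq, hc1]
    have h3 : (s i) ^ 2 ≤ η * |s i| := by
      nlinarith [hηi i, abs_nonneg (s i), sq_abs (s i)]
    linarith
  -- euclNorm (ct - c) ≤ η * S
  have hctc : euclNorm (ct - c) ≤ η * S := by
    have h1 : ∑ j, ((ct - c) j) ^ 2 ≤ ∑ j, η^2 * (s j)^2 := by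
      apply Finset.sum_le_sum
      intro j _
      have := hcomp j
      have := sq_le_sq' (by linarith [abs_nonneg (ct j - c j), (abs_le.mp (le_refl |ct j - c j|))]) this
      calc ((ct - c) j)^2 = |ct j - c j|^2 := by simp [sq_abs]
        _ ≤ (η * |s j|)^2 := by
            apply sq_le_sq' _ (hcomp j)
            have := hcomp j; linarith [abs_nonneg (ct j - c j)]
        _ = η^2 * (s j)^2 := by rw [mul_pow, sq_abs]
    calc euclNorm (ct - c) = Real.sqrt (∑ j, ((ct - c) j)^2) := rfl
      _ ≤ Real.sqrt (∑ j, η^2 * (s j)^2) := Real.sqrt_le_sqrt h1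
      _ = Real.sqrt (η^2 * ∑ j, (s j)^2) := by rw [Finset.mul_sum]
      _ = η * S := by
          rw [Real.sqrt_mul (sq_nonneg η), Real.sqrt_sq hη0]; rfl
  -- triangle: euclNorm (A ct - b) ≤ r + σmax η S
  set r : ℝ := euclNorm (A.mulVec c - b) with hr
  have hr0 : 0 ≤ r := euclNorm_nonneg' _
  have htri : euclNorm (A.mulVec ct - b) ≤ r + σmax * (η * S) := by
    have heq : A.mulVec ct - b = (A.mulVec c - b) + A.mulVec (ct - c) := by
      rw [Matrix.mulVec_sub]; abel
    rw [heq]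
    calc euclNorm ((A.mulVec c - b) + A.mulVec (ct - c))
        ≤ euclNorm (A.mulVec c - b) + euclNorm (A.mulVec (ct - c)) := euclNorm_add_le _ _
      _ ≤ r + σmax * euclNorm (ct - c) := by rw [hr]; linarith [hmax (ct - c)]
      _ ≤ r + σmax * (η * S) :=
          add_le_add_right (mul_le_mul_of_nonneg_left hctc (le_of_lt hσmaxpos)) r
  -- loss at τ
  have hlossτ : lossL A b τ ≤ (r + σmax * (η * S))^2 := by
    unfold lossL
    rw [hsinτ, hcosτ, Matrix.mulVec_zero]
    rw [show euclNorm (0 : Fin M → ℝ) = 0 from euclNorm_zero]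
    have h2 : (0:ℝ) ≤ r + σmax * (η * S) := by positivity
    have := pow_le_pow_left₀ (euclNorm_nonneg' _) htri 2
    simpa using this
  -- loss at θs
  have hlossθ : r^2 + σmin^2 * S^2 ≤ lossL A b θs := by
    unfold lossL
    have h1 : σmin * S ≤ euclNorm (A.mulVec s) := hmin s
    have h2 : (σmin * S)^2 ≤ (euclNorm (A.mulVec s))^2 :=
      pow_le_pow_left₀ (by positivity) h1 2
    have : σmin^2 * S^2 = (σmin * S)^2 := by ring
    rw [this]
    have : A.mulVec (fun i => Real.sin (θs i)) = A.mulVec s := rfl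
    simp only [hs, hc, hr] at *
    linarith
  -- the key inequality from hη
  have hden : 0 < σmax + 2 * r / S := by positivity
  have hkey : σmax * η * (σmax + 2 * r / S) ≤ σmin^2 / 2 := by
    have h1 : η * (2 * σmax * (σmax + 2 * r / S)) ≤ σmin^2 := by
      rw [← le_div_iff₀ (by positivity)]
      exact hη
    nlinarith
  -- combine: (r + σmax η S)^2 < r² + σmin² S²
  have hfinal : (r + σmax * (η * S))^2 < r^2 + σmin^2 * S^2 := by
    have hexp : (r + σmax * (η * S))^2
        = r^2 + σmax * η * S * (2*r + σmax * η * S) := by ring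
    have h2 : σmax * η * S * (2*r + σmax * η * S) ≤ σmax * η * S * (2*r + σmax * S) := by
      apply mul_le_mul_of_nonneg_left _ (by positivity)
      nlinarith [mul_nonneg (mul_nonneg hσmaxpos.le hSpos.le) (by linarith : (0:ℝ) ≤ 1 - η)]
    have h3 : σmax * η * S * (2*r + σmax * S) = σmax * η * (σmax + 2*r/S) * S^2 := by
      field_simp; ring
    have h4 : σmax * η * (σmax + 2*r/S) * S^2 ≤ σmin^2/2 * S^2 :=
      mul_le_mul_of_nonneg_right hkey (by positivity)
    have h5 : σmin^2/2 * S^2 < σmin^2 * S^2 := by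
      have : 0 < σmin^2 * S^2 := by positivity
      linarith
    rw [hexp]; linarith [h2, h3, h4, h5]
  have := hglobal τ
  have hchain : lossL A b θs < lossL A b θs := by
    calc lossL A b θs ≤ lossL A b τ := hglobal τ
      _ ≤ (r + σmax * (η * S))^2 := hlossτ
      _ < r^2 + σmin^2 * S^2 := hfinal
      _ ≤ lossL A b θs := hlossθ
  exact lt_irrefl _ hchain
end
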